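/- Let p be a prime with p ≡ 3 (mod 4), p ≠ 3, and 2^{p−1} ≢ 1 (mod p^2). If n1 and n2 are positive odd integers such that ℚ(√(1 − p^{n1})) = ℚ(√(1 − p^{n2})) (equivalently, the squarefree parts of 1 − p^{n1} and 1 − p^{n2} coincide), then n1 = n2. -/

import Mathlib

open Finset in
lemma sum_range_double {R : Type*} [AddCommMonoid R] (f : ℕ → R) (n : ℕ) :
    ∑ i ∈ range (2 * n), f i = ∑ j ∈ range n, (f (2*j) + f (2*j+1)) := by
  induction n with
  | zero => simp
  | succ n ih =>
    have h2 : 2 * (n+1) = (2*n) + 1 + 1 := by ring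
    rw [h2, sum_range_succ, sum_range_succ, ih, sum_range_succ, add_assoc]

lemma sqrtd_pow_even {D : ℤ} (j : ℕ) : (Zsqrtd.sqrtd : ℤ√D) ^ (2*j) = ((D^j : ℤ) : ℤ√D) := by
  induction j with
  | zero => simp
  | succ j ih =>
    have h : 2*(j+1) = 2*j + 2 := by ring
    rw [h, pow_add, ih, pow_two, Zsqrtd.dmuld, pow_succ]
    push_cast
    ring

lemma sqrtd_pow_odd {D : ℤ} (j : ℕ) :
    (Zsqrtd.sqrtd : ℤ√D) ^ (2*j+1) = ((D^j : ℤ) : ℤ√D) * Zsqrtd.sqrtd := by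
  rw [pow_succ, sqrtd_pow_even]

section Zv
variable (q : ℕ) (a1 : 1 < 2*q-1)

lemma xn_cast (M : ℕ) : (Pell.xn a1 (M+1) : ℤ)
    = (2*(q:ℤ)-1) * (Pell.xn a1 M) + (4*(q:ℤ)^2-4*q) * (Pell.yn a1 M) := by
  have hd := Pell.dz_val a1
  have haz : Pell.az (2*q-1) = 2*(q:ℤ)-1 := by
    show ((2*q-1 : ℕ) : ℤ) = 2*(q:ℤ)-1
    omega
  rw [haz] at hd
  have h := congrArg (Nat.cast (R := ℤ)) (Pell.xn_succ a1 M)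
  push_cast at h
  rw [hd] at h
  have hcast : ((2*q-1 : ℕ) : ℤ) = 2*(q:ℤ)-1 := by omega
  rw [hcast] at h
  linear_combination h

lemma yn_cast (M : ℕ) : (Pell.yn a1 (M+1) : ℤ)
    = (Pell.xn a1 M) + (2*(q:ℤ)-1) * (Pell.yn a1 M) := by
  have h := congrArg (Nat.cast (R := ℤ)) (Pell.yn_succ a1 M)
  push_cast at h
  have hcast : ((2*q-1 : ℕ) : ℤ) = 2*(q:ℤ)-1 := by omega
  rw [hcast] at h
  linear_combination h

open Finset Pell in
lemma Zval (M : ℕ) :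
    (Pell.xn a1 M : ℤ) + (2*(q:ℤ)-2) * (Pell.yn a1 M : ℤ)
      = ∑ j ∈ Finset.range (M+1),
          ((2*M+1).choose (2*j) : ℤ) * ((q:ℤ)-1)^j * (q:ℤ)^(M-j) := by
  have hx : ∀ M, (Pell.xn a1 (M+1) : ℤ)
      = (2*(q:ℤ)-1) * (Pell.xn a1 M) + (4*(q:ℤ)^2-4*q) * (Pell.yn a1 M) := xn_cast q a1
  have hy : ∀ M, (Pell.yn a1 (M+1) : ℤ)
      = (Pell.xn a1 M) + (2*(q:ℤ)-1) * (Pell.yn a1 M) := yn_cast q a1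
  set D : ℤ := 4*(q:ℤ)^2-4*q with hD
  have halpha : ∀ M, ((⟨2*(q:ℤ)-1, 1⟩ : ℤ√D))^M
      = ⟨(Pell.xn a1 M : ℤ), (Pell.yn a1 M : ℤ)⟩ := by
    intro M
    induction M with
    | zero => apply Zsqrtd.ext <;> simp
    | succ M ih =>
      rw [pow_succ, ih]
      apply Zsqrtd.ext
      · simp only [Zsqrtd.re_mul]
        rw [hx M]; ring
      · simp only [Zsqrtd.im_mul]
        rw [hy M]; ring
  set γ : ℤ√D := ⟨2*(q:ℤ)-2, 1⟩ with hγ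
  have hgam : γ * γ = ((4*(q:ℤ)-4 : ℤ) : ℤ√D) * ⟨2*(q:ℤ)-1, 1⟩ := by
    apply Zsqrtd.ext <;>
      simp only [Zsqrtd.re_mul, Zsqrtd.im_mul, Zsqrtd.re_intCast, Zsqrtd.im_intCast, hγ, hD] <;>
      ring
  have hgpow : ∀ M, γ^(2*M+1)
      = (((4*(q:ℤ)-4)^M : ℤ) : ℤ√D) * ((⟨2*(q:ℤ)-1, 1⟩ : ℤ√D)^M * γ) := by
    intro M
    induction M with
    | zero => simp
    | succ M ih =>
      have h : 2*(M+1)+1 = (2*M+1) + 2 := by ring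
      rw [h, pow_add, ih, pow_two, hgam, pow_succ]
      push_cast
      ring
  -- im of both sides
  have hway1 : (γ^(2*M+1)).im
      = (4*(q:ℤ)-4)^M * ((Pell.xn a1 M : ℤ) + (2*(q:ℤ)-2) * (Pell.yn a1 M : ℤ)) := by
    rw [hgpow M, halpha M]
    simp only [Zsqrtd.im_mul, Zsqrtd.re_mul, Zsqrtd.re_intCast, Zsqrtd.im_intCast, hγ]
    ring
  -- binomial expansion
  have hdecomp : γ = ((2*(q:ℤ)-2 : ℤ) : ℤ√D) + Zsqrtd.sqrtd := by
    apply Zsqrtd.ext <;> simp [hγ]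
  have hway2 : (γ^(2*M+1)).im
      = ∑ j ∈ Finset.range (M+1),
          ((2*M+1).choose (2*j) : ℤ) * (2*(q:ℤ)-2)^(2*j) * D^(M-j) := by
    rw [hdecomp, add_pow]
    have hex : 2*M+1+1 = 2*(M+1) := by ring
    rw [hex, sum_range_double (n := M+1)]
    have himsum : ∀ (s : Finset ℕ) (f : ℕ → ℤ√D), (∑ i ∈ s, f i).im = ∑ i ∈ s, (f i).im := by
      intro s f
      induction s using Finset.induction with
      | empty => simp
      | insert _ _ hnotmem ih => simp [Finset.sum_insert hnotmem, ih, Zsqrtd.im_add]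
    rw [himsum]
    apply Finset.sum_congr rfl
    intro j hj
    have hjM : j ≤ M := by simpa using Nat.lt_succ_iff.mp (Finset.mem_range.mp hj)
    have e1 : 2*M+1 - 2*j = 2*(M-j)+1 := by omega
    have e2 : 2*M+1 - (2*j+1) = 2*(M-j) := by omega
    rw [e1, e2, sqrtd_pow_odd, sqrtd_pow_even]
    have c1 : ((2*(q:ℤ)-2 : ℤ) : ℤ√D)^(2*j) = (((2*(q:ℤ)-2)^(2*j) : ℤ) : ℤ√D) := by
      push_cast; ring
    have c2 : ((2*(q:ℤ)-2 : ℤ) : ℤ√D)^(2*j+1) = (((2*(q:ℤ)-2)^(2*j+1) : ℤ) : ℤ√D) := by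
      push_cast; ring
    rw [c1, c2]
    simp only [Zsqrtd.im_add, Zsqrtd.im_mul, Zsqrtd.re_mul, Zsqrtd.re_intCast,
      Zsqrtd.im_intCast, Zsqrtd.re_sqrtd, Zsqrtd.im_sqrtd, Zsqrtd.re_natCast, Zsqrtd.im_natCast]
    push_cast
    ring
  have hmain : (4*(q:ℤ)-4)^M * ((Pell.xn a1 M : ℤ) + (2*(q:ℤ)-2) * (Pell.yn a1 M : ℤ))
      = (4*(q:ℤ)-4)^M * (∑ j ∈ Finset.range (M+1),
          ((2*M+1).choose (2*j) : ℤ) * ((q:ℤ)-1)^j * (q:ℤ)^(M-j)) := by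
    rw [← hway1, hway2, Finset.mul_sum]
    apply Finset.sum_congr rfl
    intro j hj
    have hjM : j ≤ M := Nat.lt_succ_iff.mp (Finset.mem_range.mp hj)
    set K := M - j with hKdef
    rw [show M = j + K by omega]
    rw [hD, show (4*(q:ℤ)^2-4*q) = (4*(q:ℤ)-4)*q by ring, mul_pow,
        show (2*(q:ℤ)-2)^(2*j) = ((4*(q:ℤ)-4)*((q:ℤ)-1))^j by rw [pow_mul]; ring_nf, mul_pow]
    ring
  have hne : (4*(q:ℤ)-4)^M ≠ 0 := by
    apply pow_ne_zero
    have h2 : 2 ≤ q := by omega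
    have : (2:ℤ) ≤ (q:ℤ) := by exact_mod_cast h2
    omega
  exact mul_left_cancel₀ hne hmain

open Finset in
lemma Zval_nat (M : ℕ) :
    Pell.xn a1 M + (2*q-2) * Pell.yn a1 M
      = ∑ j ∈ Finset.range (M+1), (2*M+1).choose (2*j) * (q-1)^j * q^(M-j) := by
  have h := Zval q a1 M
  have h1 : (1:ℕ) ≤ q := by omega
  have h2 : (2:ℕ) ≤ 2*q := by omega
  zify [h1, h2]
  exact h

end Zv

lemma aux7 (w : ℕ) (hw : 1 ≤ w) : 2*w+2 ≤ 7^w := by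
  induction w with
  | zero => omega
  | succ w ih =>
    rcases Nat.eq_zero_or_pos w with h0 | h1
    · subst h0; norm_num
    · have := ih h1
      have h7 : 7^(w+1) = 7 * 7^w := by ring
      omega

open Finset in
lemma S_ne_pow (p g M e : ℕ) (hp : p.Prime) (hp7 : 7 ≤ p) (hg : 1 ≤ g) (he : 1 ≤ e)
    (hS : (∑ j ∈ range (M+1), (2*M+1).choose (2*j) * (p^g-1)^j * (p^g)^(M-j)) = (p^g)^e) :
    False := by
  set q := p^g with hqdef
  have hq7 : 7 ≤ q := le_trans hp7 (Nat.le_self_pow (by omega) p)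
  rcases Nat.eq_zero_or_pos M with hM0 | hM
  · subst hM0
    simp [Finset.sum_range_one] at hS
    have : q ≤ q^e := Nat.le_self_pow (by omega) q
    omega
  -- M ≥ 1
  have h2M1 : 2*M+1 ≠ 0 := by omega
  set v := (2*M+1).factorization p with hv
  have hv1 : p^v ∣ 2*M+1 := Nat.ordProj_dvd _ _
  have hv2 : ¬ p^(v+1) ∣ 2*M+1 := Nat.pow_succ_factorization_not_dvd h2M1 hp
  rw [Finset.sum_range_succ] at hS
  have hchoose : (2*M+1).choose (2*M) = 2*M+1 := by
    exact Nat.choose_succ_self_right (2*M)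
  have hside : ∀ j ∈ range M, p^(v+1) ∣ (2*M+1).choose (2*j) * (q-1)^j * q^(M-j) := by
    intro j hj
    have hjM : j < M := Finset.mem_range.mp hj
    set j' := M - j with hj'def
    have hj'1 : 1 ≤ j' := by omega
    have hcsymm : (2*M+1).choose (2*j) = (2*M+1).choose (2*j'+1) := by
      rw [show 2*j = (2*M+1) - (2*j'+1) by omega, Nat.choose_symm (by omega)]
    set C := (2*M+1).choose (2*j'+1) with hCdef
    have hident : (2*M+1) * (2*M).choose (2*j') = C * (2*j'+1) := by
      have := Nat.add_one_mul_choose_eq (2*M) (2*j')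
      simpa [Nat.succ_eq_add_one] using this
    set w := (2*j'+1).factorization p with hw
    have hw1 : p^w ∣ 2*j'+1 := Nat.ordProj_dvd _ _
    have hwle : p^w ≤ 2*j'+1 := Nat.le_of_dvd (by omega) hw1
    have hwj : w + 1 ≤ j' := by
      rcases Nat.eq_zero_or_pos w with h0 | h1
      · omega
      · have h7 : 7^w ≤ p^w := Nat.pow_le_pow_left hp7 w
        have := aux7 w h1
        omega
    have hCne : C ≠ 0 := Nat.choose_pos (by omega) |>.ne'
    have hBne : (2*M).choose (2*j') ≠ 0 := Nat.choose_pos (by omega) |>.ne'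
    have hfeq : ((2*M+1) * (2*M).choose (2*j')).factorization p
        = (C * (2*j'+1)).factorization p := by rw [hident]
    rw [Nat.factorization_mul h2M1 hBne, Nat.factorization_mul hCne (by omega)] at hfeq
    simp only [Finsupp.add_apply] at hfeq
    have hCfac : v ≤ C.factorization p + w := by omega
    have hdvdC : p^(C.factorization p) ∣ C := Nat.ordProj_dvd _ _
    have hgj : w + 1 ≤ g * j' := le_trans hwj (Nat.le_mul_of_pos_left j' (by omega))
    have hdvd1 : p^(v+1) ∣ C * q^(M-j) := by
      have hqexp : (q:ℕ)^(M-j) = p^(g*j') := by rw [hqdef, ← pow_mul]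
      rw [hqexp]
      calc p^(v+1) ∣ p^(C.factorization p + g*j') := pow_dvd_pow p (by omega)
        _ = p^(C.factorization p) * p^(g*j') := by rw [pow_add]
        _ ∣ C * p^(g*j') := mul_dvd_mul hdvdC dvd_rfl
    have hre : (2*M+1).choose (2*j) * (q-1)^j * q^(M-j) = (C * q^(M-j)) * (q-1)^j := by
      rw [hcsymm]; ring
    rw [hre]
    exact Dvd.dvd.mul_right hdvd1 _
  have hsum_dvd : p^(v+1) ∣ ∑ j ∈ range M, (2*M+1).choose (2*j) * (q-1)^j * q^(M-j) :=
    Finset.dvd_sum hside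
  have hpnd : ¬ p ∣ (q - 1) := by
    intro h
    have hpq : p ∣ q := by rw [hqdef]; exact dvd_pow_self p (by omega)
    have : p ∣ q - (q-1) := Nat.dvd_sub hpq h
    rw [show q - (q-1) = 1 by omega] at this
    have := Nat.le_of_dvd (by omega) this
    omega
  have hcop : Nat.Coprime (p^(v+1)) ((q-1)^M) :=
    Nat.Coprime.pow _ _ ((Nat.Prime.coprime_iff_not_dvd hp).mpr hpnd)
  by_cases hge : v + 1 ≤ g * e
  · have h1 : p^(v+1) ∣ q^e := by
      rw [hqdef, ← pow_mul]; exact pow_dvd_pow p hge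
    have h2 : p^(v+1) ∣ (2*M+1).choose (2*M) * (q-1)^M * q^(M-M) := by
      have := Nat.dvd_sub h1 hsum_dvd
      rw [show q^e - (∑ j ∈ range M, (2*M+1).choose (2*j) * (q-1)^j * q^(M-j))
          = (2*M+1).choose (2*M) * (q-1)^M * q^(M-M) by omega] at this
      exact this
    rw [hchoose, Nat.sub_self, pow_zero, mul_one] at h2
    exact hv2 (Nat.Coprime.dvd_of_dvd_mul_right hcop h2)
  · have h1 : q^e ≤ p^v := by
      rw [hqdef, ← pow_mul]; exact Nat.pow_le_pow_right (by omega) (by omega)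
    have h2 : p^v ≤ 2*M+1 := Nat.le_of_dvd (by omega) hv1
    have h6 : 6 ≤ (q-1)^M := by
      calc (6:ℕ) = 6^1 := by norm_num
        _ ≤ 6^M := Nat.pow_le_pow_right (by omega) hM
        _ ≤ (q-1)^M := Nat.pow_le_pow_left (by omega) M
    have h3 : (2*M+1)*6 ≤ (2*M+1).choose (2*M) * (q-1)^M * q^(M-M) := by
      rw [hchoose, Nat.sub_self, pow_zero, mul_one]
      exact Nat.mul_le_mul_left _ h6
    omega

set_option maxHeartbeats 2000000 in
open Finset in
lemma no_sq_geom (p g k y : ℕ) (hp : p.Prime) (hp7 : 7 ≤ p) (hg : 1 ≤ g)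
    (hk : Odd k) (hk3 : 3 ≤ k) (hy : y^2 = ∑ i ∈ range k, (p^g)^i) : False := by
  set q := p^g with hqdef
  have hq7 : 7 ≤ q := le_trans hp7 (Nat.le_self_pow (by omega) p)
  obtain ⟨c, hc⟩ := hk
  have hc1 : 1 ≤ c := by omega
  -- q odd
  have hpodd : p % 2 = 1 := Nat.Prime.eq_two_or_odd hp |>.resolve_left (by omega)
  have hqodd : q % 2 = 1 := by
    rw [hqdef, Nat.pow_mod, hpodd, Nat.one_pow]
  have hqcodd : q^c % 2 = 1 := by
    rw [Nat.pow_mod, hqodd, Nat.one_pow]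
  -- y odd
  have hyodd : y % 2 = 1 := by
    have hsum : (∑ i ∈ range k, q^i) % 2 = 1 := by
      have h1 : (∑ i ∈ range k, q^i) % 2 = (∑ i ∈ range k, q^i % 2) % 2 :=
        Finset.sum_nat_mod _ _ _
      have h2 : ∀ i ∈ range k, q^i % 2 = 1 := by
        intro i _
        rw [Nat.pow_mod, hqodd, Nat.one_pow]
      rw [Finset.sum_congr rfl h2, Finset.sum_const, card_range, smul_eq_mul, mul_one] at h1
      omega
    have h3 : y^2 % 2 = 1 := by rw [hy]; exact hsum
    have h4 : y^2 % 2 = (y%2)*(y%2) % 2 := by rw [pow_two, Nat.mul_mod]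
    rcases Nat.mod_two_eq_zero_or_one y with h5 | h5
    · rw [h5] at h4; norm_num at h4; omega
    · exact h5
  -- integer key equation
  have hkey : ((q:ℤ)-1) * (y:ℤ)^2 = (q:ℤ)^k - 1 := by
    have hG := geom_sum_mul ((q:ℤ)) k
    have hcast := congrArg (Nat.cast (R := ℤ)) hy
    push_cast at hcast
    rw [← hcast] at hG
    linear_combination hG
  set P : ℤ := (q:ℤ)^c with hPdef
  have hk2 : (q:ℤ)^k = (q:ℤ) * P^2 := by
    rw [hc, hPdef, show 2*c+1 = c*2+1 by ring, pow_succ, pow_mul]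
    ring
  have hkey2 : ((q:ℤ)-1) * (y:ℤ)^2 = (q:ℤ)*P^2 - 1 := by rw [hkey, hk2]
  -- parity over ℤ
  have hyoddZ : (y:ℤ) % 2 = 1 := by omega
  have hPoddZ : P % 2 = 1 := by
    have : ((q^c : ℕ) : ℤ) = P := by rw [hPdef]; push_cast; ring
    omega
  obtain ⟨t, ht⟩ : ∃ t : ℤ, (y:ℤ) = P + 2*t := ⟨((y:ℤ) - P)/2, by omega⟩
  rw [ht] at hkey2
  set u : ℤ := (q:ℤ)*P - ((q:ℤ)-1)*(P + 2*t) with hudef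
  have hu : u^2 - (4*(q:ℤ)^2-4*q)*t^2 = 1 := by
    rw [hudef]
    linear_combination (-1 : ℤ) * hkey2
  have hut : u + (2*(q:ℤ)-2)*t = P := by rw [hudef]; ring
  -- Pell setup
  have a1 : 1 < 2*q-1 := by omega
  set U := u.natAbs with hUdef
  set T := t.natAbs with hTdef
  have hU2 : ((U:ℤ))*(U:ℤ) = u*u := by exact_mod_cast Int.natAbs_mul_self (a := u)
  have hT2 : ((T:ℤ))*(T:ℤ) = t*t := by exact_mod_cast Int.natAbs_mul_self (a := t)
  have hAA : (((2*q-1)*(2*q-1)-1 : ℕ) : ℤ) = 4*(q:ℤ)^2-4*q := by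
    have h1 : (1:ℕ) ≤ (2*q-1)*(2*q-1) := by
      have h13 : 13 ≤ 2*q-1 := by omega
      exact le_trans (by norm_num) (Nat.mul_le_mul h13 h13)
    push_cast [Nat.cast_sub h1]
    have : ((2*q-1 : ℕ) : ℤ) = 2*(q:ℤ)-1 := by omega
    rw [this]
    ring
  have hZeq : ((U:ℤ))*(U:ℤ) = (((2*q-1)*(2*q-1)-1 : ℕ) : ℤ)*(T:ℤ)*(T:ℤ) + 1 := by
    rw [hU2, hAA]
    linear_combination hu - (4*(q:ℤ)^2-4*q) * hT2
  have hNat : U*U = ((2*q-1)*(2*q-1)-1)*T*T + 1 := by exact_mod_cast hZeq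
  have hUT : U*U - ((2*q-1)*(2*q-1)-1)*T*T = 1 := by omega
  obtain ⟨N, hxN, hyN⟩ := Pell.eq_pell a1 hUT
  have hxZ : (U:ℤ) = (Pell.xn a1 N : ℤ) := congrArg (Nat.cast (R := ℤ)) hxN
  have hyZ : (T:ℤ) = (Pell.yn a1 N : ℤ) := congrArg (Nat.cast (R := ℤ)) hyN
  have hUge1 : 1 ≤ (U:ℤ) := by
    have h : 1 ≤ U := by
      rcases Nat.eq_zero_or_pos U with h0 | h1
      · rw [h0] at hNat; simp at hNat
      · exact h1
    exact_mod_cast h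
  have hTge0 : 0 ≤ (T:ℤ) := Int.natCast_nonneg T
  have hDU : (U:ℤ)*(U:ℤ) = (4*(q:ℤ)^2-4*q)*(T:ℤ)*(T:ℤ) + 1 := by rw [hAA] at hZeq; exact hZeq
  have hqZ : (7:ℤ) ≤ (q:ℤ) := by exact_mod_cast hq7
  have hPge : (q:ℤ) ≤ P := by
    rw [hPdef]
    calc (q:ℤ) = (q:ℤ)^1 := by ring
      _ ≤ (q:ℤ)^c := pow_le_pow_right₀ (by omega) hc1
  -- sign analysis
  have hZM : ∃ M : ℕ, (Pell.xn a1 M : ℤ) + (2*(q:ℤ)-2) * (Pell.yn a1 M : ℤ) = P := by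
    rcases Int.natAbs_eq u with hu1 | hu2 <;> rcases Int.natAbs_eq t with ht1 | ht2
    · exact ⟨N, by rw [← hxZ, ← hyZ, ← hu1, ← ht1]; exact hut⟩
    · -- u = U, t = -T
      have hPW : (Pell.xn a1 N : ℤ) - (2*(q:ℤ)-2) * (Pell.yn a1 N : ℤ) = P := by
        rw [← hxZ, ← hyZ]
        rw [hu1, ht2] at hut
        linear_combination hut
      cases N with
      | zero =>
        exfalso
        simp [Pell.xn_zero, Pell.yn_zero] at hPW
        omega
      | succ N' =>
        refine ⟨N', ?_⟩
        have hxc := xn_cast q a1 N'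
        have hyc := yn_cast q a1 N'
        rw [hxc, hyc] at hPW
        linear_combination hPW
    · -- u = -U, t = T
      exfalso
      rw [hu2, ht1] at hut
      have hPU : (2*(q:ℤ)-2)*(T:ℤ) = P + (U:ℤ) := by linarith [hut]
      have h1 : ((2*(q:ℤ)-2)*(T:ℤ))^2 = (P + (U:ℤ))^2 := by rw [hPU]
      have hexp : P^2 + 2*P*(U:ℤ) + 1 + (4*(q:ℤ)-4)*(T:ℤ)^2 = 0 := by
        linear_combination (-1 : ℤ)*h1 - hDU
      have hP0 : (0:ℤ) ≤ P := by linarith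
      have hn1 : (0:ℤ) ≤ 2*P*(U:ℤ) := by positivity
      have hn2 : (0:ℤ) ≤ (4*(q:ℤ)-4)*(T:ℤ)^2 := by
        apply mul_nonneg (by linarith) (sq_nonneg _)
      linarith [hexp, hn1, hn2, sq_nonneg P]
    · -- u = -U, t = -T
      exfalso
      rw [hu2, ht2] at hut
      have hn1 : (0:ℤ) ≤ (2*(q:ℤ)-2)*(T:ℤ) := by
        apply mul_nonneg (by linarith) hTge0
      linarith
  obtain ⟨M, hZM⟩ := hZM
  have hNateq : Pell.xn a1 M + (2*q-2) * Pell.yn a1 M = q^c := by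
    have h2q : (((2*q-2) : ℕ) : ℤ) = 2*(q:ℤ)-2 := by omega
    have h : ((Pell.xn a1 M + (2*q-2) * Pell.yn a1 M : ℕ) : ℤ) = ((q^c : ℕ) : ℤ) := by
      push_cast [h2q]
      rw [hPdef] at hZM
      exact hZM
    exact_mod_cast h
  rw [Zval_nat q a1 M] at hNateq
  rw [hqdef] at hNateq
  exact S_ne_pow p g M c hp hp7 hg hc1 hNateq

open Finset in
lemma prod_sq_imp (p m n X : ℕ) (hp : p.Prime) (hp7 : 7 ≤ p) (hm : 0 < m) (hmn : m < n)
    (hom : Odd m) (hon : Odd n) (hX : (p^m - 1)*(p^n - 1) = X^2) : False := by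
  set g := Nat.gcd m n with hgdef
  have hg : 0 < g := Nat.gcd_pos_of_pos_left _ hm
  have hgm : g ∣ m := Nat.gcd_dvd_left m n
  have hgn : g ∣ n := Nat.gcd_dvd_right m n
  set k1 := m / g with hk1def
  set k2 := n / g with hk2def
  have hk1 : g * k1 = m := Nat.mul_div_cancel' hgm
  have hk2 : g * k2 = n := Nat.mul_div_cancel' hgn
  set q := p^g with hqdef
  have hq7 : 7 ≤ q := le_trans hp7 (Nat.le_self_pow (by omega) p)
  have h1q : 1 ≤ q := by omega
  set A := ∑ i ∈ range k1, q^i with hAdef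
  set B := ∑ i ∈ range k2, q^i with hBdef
  have hqk1 : q^k1 = p^m := by rw [hqdef, ← pow_mul, hk1]
  have hqk2 : q^k2 = p^n := by rw [hqdef, ← pow_mul, hk2]
  have h1pm : 1 ≤ p^m := Nat.one_le_pow _ _ (by omega)
  have h1pn : 1 ≤ p^n := Nat.one_le_pow _ _ (by omega)
  have hA : (q-1) * A = p^m - 1 := by
    have hAZ : ((q:ℤ)-1) * (A:ℤ) = (q:ℤ)^k1 - 1 := by
      have hgs := geom_sum_mul ((q:ℤ)) k1
      rw [hAdef]
      push_cast
      linear_combination hgs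
    have hAZ2 : ((q:ℤ)-1) * (A:ℤ) = (p:ℤ)^m - 1 := by
      rw [hAZ, show ((q:ℤ))^k1 = ((p:ℤ))^m by exact_mod_cast congrArg (Nat.cast (R:=ℤ)) hqk1]
    zify [h1q, h1pm]
    exact hAZ2
  have hB : (q-1) * B = p^n - 1 := by
    have hBZ : ((q:ℤ)-1) * (B:ℤ) = (q:ℤ)^k2 - 1 := by
      have hgs := geom_sum_mul ((q:ℤ)) k2
      rw [hBdef]
      push_cast
      linear_combination hgs
    have hBZ2 : ((q:ℤ)-1) * (B:ℤ) = (p:ℤ)^n - 1 := by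
      rw [hBZ, show ((q:ℤ))^k2 = ((p:ℤ))^n by exact_mod_cast congrArg (Nat.cast (R:=ℤ)) hqk2]
    zify [h1q, h1pn]
    exact hBZ2
  -- coprimality of A and B
  set c := Nat.gcd A B with hcdef
  have hcA : c ∣ A := Nat.gcd_dvd_left A B
  have hcB : c ∣ B := Nat.gcd_dvd_right A B
  have hcM1 : c ∣ p^m - 1 := by
    rw [← hA]; exact hcA.trans (dvd_mul_left A (q-1))
  have hcM2 : c ∣ p^n - 1 := by
    rw [← hB]; exact hcB.trans (dvd_mul_left B (q-1))
  have hpm1 : ((p : ZMod c))^m = 1 := by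
    have h0 : ((p^m - 1 : ℕ) : ZMod c) = 0 := (ZMod.natCast_eq_zero_iff _ _).mpr hcM1
    push_cast [Nat.cast_sub h1pm] at h0
    linear_combination (exp := 1) h0
  have hpn1 : ((p : ZMod c))^n = 1 := by
    have h0 : ((p^n - 1 : ℕ) : ZMod c) = 0 := (ZMod.natCast_eq_zero_iff _ _).mpr hcM2
    push_cast [Nat.cast_sub h1pn] at h0
    linear_combination (exp := 1) h0
  have hordg : ((p : ZMod c))^g = 1 := by
    apply orderOf_dvd_iff_pow_eq_one.mp
    rw [hgdef]
    exact Nat.dvd_gcd (orderOf_dvd_of_pow_eq_one hpm1) (orderOf_dvd_of_pow_eq_one hpn1)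
  have hq1Z : ((q : ℕ) : ZMod c) = 1 := by
    rw [hqdef]; push_cast; exact hordg
  have hcdvd : ∀ (kk : ℕ) (S : ℕ), S = ∑ i ∈ range kk, q^i → c ∣ S → c ∣ kk := by
    intro kk S hS hcS
    have h0 : ((S : ℕ) : ZMod c) = 0 := (ZMod.natCast_eq_zero_iff _ _).mpr hcS
    rw [hS] at h0
    push_cast at h0
    rw [Finset.sum_congr rfl (fun i _ => by rw [hq1Z, one_pow])] at h0
    rw [Finset.sum_const, card_range, nsmul_eq_mul, mul_one] at h0
    exact (ZMod.natCast_eq_zero_iff _ _).mp h0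
  have hck1 : c ∣ k1 := hcdvd k1 A hAdef hcA
  have hck2 : c ∣ k2 := hcdvd k2 B hBdef hcB
  have hcop12 : Nat.Coprime k1 k2 := Nat.coprime_div_gcd_div_gcd hg
  have hc1 : c = 1 := by
    have hd := Nat.dvd_gcd hck1 hck2
    have hg1 : Nat.gcd k1 k2 = 1 := hcop12
    rw [hg1] at hd
    exact Nat.eq_one_of_dvd_one hd
  -- split square
  have hXX : X^2 = (q-1)^2 * (A*B) := by
    rw [← hX, ← hA, ← hB]; ring
  have hGX : (q-1) ∣ X := by
    rw [← Nat.pow_dvd_pow_iff (n := 2) (by omega)]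
    exact ⟨A*B, hXX⟩
  obtain ⟨Y, hY⟩ := hGX
  have hAB : A * B = Y^2 := by
    have h2 : (q-1)^2 * (A*B) = (q-1)^2 * Y^2 := by
      rw [← hXX, hY]; ring
    refine Nat.eq_of_mul_eq_mul_left ?_ h2
    have : 6 ≤ q - 1 := by omega
    positivity
  -- B is a perfect square
  have hcopAB : IsCoprime (A:ℤ) (B:ℤ) := by
    rw [Int.isCoprime_iff_gcd_eq_one]
    exact_mod_cast hc1
  obtain ⟨b', hb'⟩ := Int.sq_of_isCoprime hcopAB.symm
      (show (B:ℤ) * (A:ℤ) = (Y:ℤ)^2 by exact_mod_cast by rw [mul_comm]; exact hAB)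
  have hBpos : 0 < B := by
    rw [hBdef]
    apply Finset.sum_pos
    · intro i _
      exact Nat.pow_pos (by omega : 0 < q)
    · rw [Finset.nonempty_range_iff]
      intro h
      rw [h] at hk2
      omega
  have hBsq : ∃ y : ℕ, y^2 = B := by
    rcases hb' with h | h
    · refine ⟨b'.natAbs, ?_⟩
      have hb2 : ((b'.natAbs : ℤ))^2 = (B:ℤ) := by
        rw [← Int.abs_eq_natAbs, sq_abs]; exact h.symm
      exact_mod_cast hb2
    · exfalso
      have hbb : (0:ℤ) ≤ b'^2 := sq_nonneg b'
      have hBZ : (0:ℤ) < (B:ℤ) := by exact_mod_cast hBpos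
      linarith
  obtain ⟨y, hy⟩ := hBsq
  have hk2odd : Odd k2 := by
    rw [← hk2] at hon
    exact (Nat.odd_mul.mp hon).2
  have hgle : g ≤ m := Nat.le_of_dvd hm hgm
  have hk2ge2 : 2 ≤ k2 := by
    by_contra hcon
    push_neg at hcon
    have : g*k2 ≤ g*1 := Nat.mul_le_mul_left g (by omega)
    omega
  have hk23 : 3 ≤ k2 := by obtain ⟨w, hw⟩ := hk2odd; omega
  have hyfin : y^2 = ∑ i ∈ range k2, (p^g)^i := by
    rw [hy, hBdef]
  exact no_sq_geom p g k2 y hp hp7 hg hk2odd hk23 hyfin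

/-- Let `p` be a prime with `p ≡ 3 (mod 4)`, `p ≠ 3`, and `2^(p−1) ≢ 1 (mod p^2)`.
If `n1` and `n2` are positive odd integers such that `ℚ(√(1 − p^n1)) = ℚ(√(1 − p^n2))`,
then `n1 = n2`. -/
theorem stmt_3 (p : ℕ) (hp : p.Prime) (hmod : p % 4 = 3) (hne : p ≠ 3)
    (hnw : ¬ (2 ^ (p - 1) ≡ 1 [MOD p ^ 2]))
    (n1 n2 : ℕ) (hpos1 : 0 < n1) (hpos2 : 0 < n2) (ho1 : Odd n1) (ho2 : Odd n2)
    (z1 z2 : ℂ) (hz1 : z1 ^ 2 = 1 - (p : ℂ) ^ n1) (hz2 : z2 ^ 2 = 1 - (p : ℂ) ^ n2)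
    (heq : IntermediateField.adjoin ℚ {z1} = IntermediateField.adjoin ℚ {z2}) :
    n1 = n2 := by
  have hp7 : 7 ≤ p := by omega
  -- no rational square root of 1 - p^n
  have hirr : ∀ (nn : ℕ), 0 < nn → ∀ cc : ℚ, ((cc:ℂ))^2 ≠ 1 - (p:ℂ)^nn := by
    intro nn hnn cc hcc
    have h1 : ((cc^2 : ℚ) : ℂ) = ((1 - (p:ℚ)^nn : ℚ) : ℂ) := by
      push_cast
      exact hcc
    have h2 : (cc^2 : ℚ) = 1 - (p:ℚ)^nn := by exact_mod_cast h1
    have h3 : (7:ℚ) ≤ (p:ℚ) := by exact_mod_cast hp7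
    have h4 : (p:ℚ) ≤ (p:ℚ)^nn := le_self_pow₀ (by linarith) (by omega)
    nlinarith [sq_nonneg cc]
  -- z2 is integral over ℚ
  have hz2i : IsIntegral ℚ z2 := by
    refine ⟨Polynomial.X^2 + Polynomial.C ((p:ℚ)^n2 - 1),
      Polynomial.monic_X_pow_add_C _ two_ne_zero, ?_⟩
    simp only [Polynomial.eval₂_add, Polynomial.eval₂_pow, Polynomial.eval₂_X,
      Polynomial.eval₂_C, hz2]
    have halg : (algebraMap ℚ ℂ) ((p:ℚ)^n2 - 1) = (p:ℂ)^n2 - 1 := by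
      push_cast
      simp
    rw [halg]
    ring
  have hz1K : z1 ∈ IntermediateField.adjoin ℚ {z2} := by
    rw [← heq]; exact IntermediateField.mem_adjoin_simple_self ℚ z1
  have hz2K : z2 ∈ IntermediateField.adjoin ℚ {z2} :=
    IntermediateField.mem_adjoin_simple_self ℚ z2
  haveI hFD : FiniteDimensional ℚ (IntermediateField.adjoin ℚ {z2}) :=
    IntermediateField.adjoin.finiteDimensional hz2i
  have hrank : Module.finrank ℚ (IntermediateField.adjoin ℚ {z2}) ≤ 2 := by
    rw [IntermediateField.adjoin.finrank hz2i]
    have hev : Polynomial.aeval z2 (Polynomial.X^2 + Polynomial.C ((p:ℚ)^n2 - 1)) = 0 := by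
      simp only [map_add, Polynomial.aeval_X_pow, Polynomial.aeval_C, hz2]
      have halg : (algebraMap ℚ ℂ) ((p:ℚ)^n2 - 1) = (p:ℂ)^n2 - 1 := by
        push_cast
        simp
      rw [halg]
      ring
    have hdvd := minpoly.dvd ℚ z2 hev
    have hne0 : (Polynomial.X^2 + Polynomial.C ((p:ℚ)^n2 - 1)) ≠ 0 :=
      (Polynomial.monic_X_pow_add_C _ two_ne_zero).ne_zero
    have := Polynomial.natDegree_le_of_dvd hdvd hne0
    rwa [Polynomial.natDegree_X_pow_add_C] at this
  set v : Fin 3 → (IntermediateField.adjoin ℚ {z2}) := ![1, ⟨z1, hz1K⟩, ⟨z2, hz2K⟩] with hv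
  have hnli : ¬ LinearIndependent ℚ v := by
    intro h
    have h3 := h.fintype_card_le_finrank
    simp only [Fintype.card_fin] at h3
    omega
  rw [Fintype.not_linearIndependent_iff] at hnli
  obtain ⟨gg, hgsum, i0, hgi⟩ := hnli
  have hsumC : (gg 0 : ℂ) + (gg 1 : ℂ) * z1 + (gg 2 : ℂ) * z2 = 0 := by
    rw [Fin.sum_univ_three, hv] at hgsum
    simp only [Matrix.cons_val_zero, Matrix.cons_val_one, Matrix.head_cons,
      Matrix.cons_val_two, Matrix.tail_cons] at hgsum
    rw [Rat.smul_def, Rat.smul_def, Rat.smul_def] at hgsum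
    have h := congrArg ((IntermediateField.adjoin ℚ {z2}).val) hgsum
    rw [map_add, map_add, map_mul, map_mul, map_mul, map_zero] at h
    rw [map_ratCast, map_ratCast, map_ratCast, map_one] at h
    have e1 : ((IntermediateField.adjoin ℚ {z2}).val ⟨z1, hz1K⟩) = z1 := rfl
    have e2 : ((IntermediateField.adjoin ℚ {z2}).val ⟨z2, hz2K⟩) = z2 := rfl
    rw [e1, e2] at h
    rw [mul_one] at h
    exact h
  have hratandz2 : ∀ aa bb : ℚ, (aa : ℂ) + (bb : ℂ) * z2 = 0 → bb = 0 ∧ aa = 0 := by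
    intro aa bb hab
    by_cases hbb : bb = 0
    · refine ⟨hbb, ?_⟩
      rw [hbb] at hab
      simpa using hab
    · exfalso
      have hz2r : z2 = ((-aa/bb : ℚ) : ℂ) := by
        have hbC : (bb : ℂ) ≠ 0 := by exact_mod_cast hbb
        push_cast
        field_simp
        linear_combination hab
      exact hirr n2 hpos2 _ (by rw [← hz2r]; exact hz2)
  -- gg 1 ≠ 0
  have hg1ne : gg 1 ≠ 0 := by
    intro h10
    rw [h10] at hsumC
    push_cast at hsumC
    have h' : (gg 0 : ℂ) + (gg 2 : ℂ) * z2 = 0 := by linear_combination hsumC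
    obtain ⟨h20, h00⟩ := hratandz2 _ _ h'
    apply hgi
    rcases i0 with ⟨iv, hiv⟩
    interval_cases iv
    · exact h00
    · exact h10
    · exact h20
  -- squared relation
  have hz1eq : (gg 1 : ℂ) * z1 = -((gg 0 : ℂ) + (gg 2 : ℂ) * z2) := by
    linear_combination hsumC
  have hsq : ((gg 1 : ℂ))^2 * (1 - (p:ℂ)^n1) = ((gg 0 : ℂ) + (gg 2 : ℂ)*z2)^2 := by
    have h : ((gg 1 : ℂ) * z1)^2 = (-((gg 0 : ℂ) + (gg 2 : ℂ) * z2))^2 := by rw [hz1eq]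
    rw [← hz1]
    linear_combination h
  -- coefficient of z2 must vanish: gg 0 = 0
  have hg0 : gg 0 = 0 := by
    by_contra h00
    have hz2Q : ((2*gg 0*gg 2 : ℚ) : ℂ) * z2
        = (((gg 1)^2*(1-(p:ℚ)^n1) - (gg 0)^2 - (gg 2)^2*(1-(p:ℚ)^n2) : ℚ) : ℂ) := by
      push_cast
      linear_combination (-1 : ℂ)*hsq - ((gg 2 : ℂ))^2 * hz2
    by_cases h20 : gg 2 = 0
    · -- then gg1^2 (1 - p^n1) = gg0^2  : so (gg0/gg1)^2 = 1 - p^n1, rational sqrt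
      rw [h20] at hsq
      push_cast at hsq
      have hz1r : ((gg 0 / gg 1 : ℚ) : ℂ)^2 = 1 - (p:ℂ)^n1 := by
        have hg1C : (gg 1 : ℂ) ≠ 0 := by exact_mod_cast hg1ne
        push_cast
        field_simp
        linear_combination (-1 : ℂ) * hsq
      exact hirr n1 hpos1 _ hz1r
    · have hcoe : (2*gg 0*gg 2 : ℚ) ≠ 0 := by
        apply mul_ne_zero (mul_ne_zero (by norm_num) h00) h20
      have hz2r : z2 = ((((gg 1)^2*(1-(p:ℚ)^n1) - (gg 0)^2 - (gg 2)^2*(1-(p:ℚ)^n2)) / (2*gg 0*gg 2) : ℚ) : ℂ) := by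
        have hcC : ((2*gg 0*gg 2 : ℚ) : ℂ) ≠ 0 := by exact_mod_cast hcoe
        rw [Rat.cast_div, eq_div_iff hcC]
        linear_combination hz2Q
      exact hirr n2 hpos2 _ (by rw [← hz2r]; exact hz2)
  -- final rational equation
  have hfinC : ((gg 1 : ℂ))^2 * (1 - (p:ℂ)^n1) = (gg 2 : ℂ)^2 * (1 - (p:ℂ)^n2) := by
    rw [hg0] at hsq
    push_cast at hsq
    linear_combination hsq + ((gg 2 : ℂ))^2 * hz2
  have hfin : ((gg 1 : ℚ))^2 * (1 - (p:ℚ)^n1) = (gg 2)^2 * (1 - (p:ℚ)^n2) := by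
    exact_mod_cast hfinC
  -- pass to β = gg2/gg1
  set β : ℚ := gg 2 / gg 1 with hβdef
  have hβ : (p:ℚ)^n1 - 1 = β^2 * ((p:ℚ)^n2 - 1) := by
    rw [hβdef]
    field_simp
    linear_combination (-1 : ℚ) * hfin
  have hnum : (β.num : ℚ) = β * β.den := by
    have hd : ((β.den:ℚ)) ≠ 0 := by
      have := β.den_nz
      exact_mod_cast this
    have h := Rat.num_div_den β
    calc (β.num:ℚ) = ((β.num:ℚ)/(β.den:ℚ))*(β.den:ℚ) := by field_simp
      _ = β * β.den := by rw [h]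
  have hQ : ((β.den:ℚ))^2 * ((p:ℚ)^n1 - 1) = (β.num:ℚ)^2 * ((p:ℚ)^n2 - 1) := by
    linear_combination ((β.den:ℚ))^2*hβ - ((β.num:ℚ) + β*(β.den:ℚ))*((p:ℚ)^n2 - 1)*hnum
  have hZ : ((β.den : ℤ))^2 * ((p:ℤ)^n1 - 1) = (β.num)^2 * ((p:ℤ)^n2 - 1) := by
    exact_mod_cast hQ
  -- build natural square
  have h1pm : 1 ≤ p^n1 := Nat.one_le_pow _ _ (by omega)
  have h1pn : 1 ≤ p^n2 := Nat.one_le_pow _ _ (by omega)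
  have hM1 : ((p^n1 - 1 : ℕ) : ℤ) = (p:ℤ)^n1 - 1 := by push_cast [Nat.cast_sub h1pm]; ring
  have hM2 : ((p^n2 - 1 : ℕ) : ℤ) = (p:ℤ)^n2 - 1 := by push_cast [Nat.cast_sub h1pn]; ring
  have hden0 : ((β.den : ℤ)) ≠ 0 := by
    have := β.den_nz
    exact_mod_cast this
  have hsqdvd : ((β.den : ℤ))^2 ∣ (β.num * ((p^n2-1 : ℕ) : ℤ))^2 := by
    refine ⟨((p^n1-1 : ℕ) : ℤ) * ((p^n2-1 : ℕ) : ℤ), ?_⟩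
    rw [hM1, hM2]
    linear_combination (1 - (p:ℤ)^n2) * hZ
  have hdvd : ((β.den : ℤ)) ∣ β.num * ((p^n2-1 : ℕ) : ℤ) :=
    (Int.pow_dvd_pow_iff two_ne_zero).mp hsqdvd
  obtain ⟨w, hw⟩ := hdvd
  have hwsq : w^2 = ((p^n1-1 : ℕ) : ℤ) * ((p^n2-1 : ℕ) : ℤ) := by
    have hd2 : ((β.den : ℤ))^2 ≠ 0 := pow_ne_zero _ hden0
    apply mul_left_cancel₀ hd2
    have : (β.num * ((p^n2-1 : ℕ) : ℤ))^2 = ((β.den : ℤ))^2 * (w^2) := by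
      rw [hw]; ring
    rw [← this, hM1, hM2]
    linear_combination (1 - (p:ℤ)^n2) * hZ
  have hXX : (p^n1 - 1) * (p^n2 - 1) = (w.natAbs)^2 := by
    have hww : ((w.natAbs : ℤ))^2 = ((p^n1-1 : ℕ) : ℤ) * ((p^n2-1 : ℕ) : ℤ) := by
      rw [← Int.abs_eq_natAbs, sq_abs]; exact hwsq
    exact_mod_cast hww.symm
  rcases lt_trichotomy n1 n2 with h | h | h
  · exact absurd hXX (by intro hc; exact prod_sq_imp p n1 n2 w.natAbs hp hp7 hpos1 h ho1 ho2 hc)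
  · exact h
  · exfalso
    apply prod_sq_imp p n2 n1 w.natAbs hp hp7 hpos2 h ho2 ho1
    rw [mul_comm]
    exact hXX
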